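/- Let k ≥ 2 and let P_k denote the directed path on k vertices v_1, …, v_k with arcs v_1→v_2, v_2→v_3, …, v_{k−1}→v_k. Then for every n, exo(n, P_k) = e(T(n, k−1)), the number of edges of the Turán graph T(n, k−1). -/

import Mathlib

/-- An oriented graph `G` contains a copy of the oriented graph `F`. -/
def Copies {α β : Type*} (F : α → α → Prop) (G : β → β → Prop) : Prop :=
  ∃ f : α → β, Function.Injective f ∧ ∀ a b, F a b → G (f a) (f b)

/-- The oriented Turán number. -/
noncomputable def exo {α : Type*} (n : ℕ) (F : α → α → Prop) : ℕ :=
  sSup {m : ℕ | ∃ G : Fin n → Fin n → Prop,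
    (∀ v, ¬ G v v) ∧ (∀ u v, G u v → ¬ G v u) ∧
    ¬ Copies F G ∧ {p : Fin n × Fin n | G p.1 p.2}.ncard = m}

/-- The number of edges of the Turán graph `T(n,k)`. -/
noncomputable def eTuran (n k : ℕ) : ℕ := (SimpleGraph.turanGraph n k).edgeSet.ncard

open Relation

/-- Auxiliary: arc count of an irreflexive asymmetric relation equals edge count of
its symmetrization. -/
lemma arcs_ncard_eq {V : Type*} (G : V → V → Prop)
    (hasym : ∀ u v, G u v → ¬ G v u)
    (H : SimpleGraph V) (hH : ∀ u v, H.Adj u v ↔ G u v ∨ G v u) :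
    {p : V × V | G p.1 p.2}.ncard = H.edgeSet.ncard := by
  have himg : (fun p : V × V => s(p.1, p.2)) '' {p | G p.1 p.2} = H.edgeSet := by
    ext e
    induction e using Sym2.ind with
    | _ x y =>
      simp only [Set.mem_image, SimpleGraph.mem_edgeSet, hH, Set.mem_setOf_eq]
      constructor
      · rintro ⟨⟨a, b⟩, hab, he⟩
        simp only [Sym2.eq_iff] at he
        rcases he with ⟨rfl, rfl⟩ | ⟨rfl, rfl⟩
        · exact Or.inl hab
        · exact Or.inr hab
      · rintro (h | h)
        · exact ⟨(x, y), h, rfl⟩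
        · exact ⟨(y, x), h, Sym2.eq_swap⟩
  rw [← himg, Set.ncard_image_of_injOn]
  rintro ⟨a, b⟩ ha ⟨c, d⟩ hc he
  simp only [Set.mem_setOf_eq] at ha hc
  simp only [Sym2.eq_iff] at he
  rcases he with ⟨rfl, rfl⟩ | ⟨rfl, rfl⟩
  · rfl
  · exact absurd hc (hasym _ _ ha)

lemma transGen_union_single {α : Type*} {R : α → α → Prop} {u v a b : α}
    (h : TransGen (fun x y => R x y ∨ (x = u ∧ y = v)) a b) :
    TransGen R a b ∨ (ReflTransGen R a u ∧ ReflTransGen R v b) := by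
  induction h with
  | single hs =>
    rcases hs with hs | ⟨rfl, rfl⟩
    · exact Or.inl (TransGen.single hs)
    · exact Or.inr ⟨ReflTransGen.refl, ReflTransGen.refl⟩
  | tail h' hs ih =>
    rcases hs with hs | ⟨rfl, rfl⟩
    · rcases ih with t | ⟨p, q⟩
      · exact Or.inl (t.tail hs)
      · exact Or.inr ⟨p, q.tail hs⟩
    · rcases ih with t | ⟨p, q⟩
      · exact Or.inr ⟨t.to_reflTransGen, ReflTransGen.refl⟩
      · exact Or.inr ⟨p, ReflTransGen.refl⟩

lemma chain_transGen {α : Type*} {R : α → α → Prop} {m : ℕ} (f : Fin (m + 1) → α)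
    (hf : ∀ i : Fin m, R (f i.castSucc) (f i.succ)) :
    ∀ (j : ℕ) (hj : j < m + 1) (i : Fin (m + 1)), (i : ℕ) < j →
      TransGen R (f i) (f ⟨j, hj⟩) := by
  intro j
  induction j with
  | zero => omega
  | succ j ih =>
    intro hj i hi
    have hjm : j < m := by omega
    have hstep : R (f ⟨j, by omega⟩) (f ⟨j + 1, hj⟩) := by
      have := hf ⟨j, hjm⟩
      simpa [Fin.castSucc, Fin.succ, Fin.castAdd, Fin.castLE] using this
    rcases Nat.lt_or_ge (i : ℕ) j with h | h
    · exact (ih (by omega) i h).tail hstep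
    · have : (i : ℕ) = j := by omega
      have hi' : i = ⟨j, by omega⟩ := Fin.ext this
      rw [hi']
      exact TransGen.single hstep

/-- Extend a chain by one step. -/
lemma chain_extend {α : Type*} {R : α → α → Prop} {m : ℕ} {x y : α}
    (f : Fin (m + 1) → α) (hlast : f (Fin.last m) = x)
    (hf : ∀ i : Fin m, R (f i.castSucc) (f i.succ)) (hxy : R x y) :
    ∃ g : Fin (m + 2) → α, g (Fin.last (m + 1)) = y ∧
      ∀ i : Fin (m + 1), R (g i.castSucc) (g i.succ) := by
  refine ⟨fun j => if h : (j : ℕ) < m + 1 then f ⟨(j : ℕ), h⟩ else y, ?_, ?_⟩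
  · simp [Fin.last]
  · intro i
    have hilt := i.isLt
    dsimp only
    by_cases hi : (i : ℕ) < m
    · have c1 : ((i.castSucc : Fin (m + 2)) : ℕ) = (i : ℕ) := rfl
      have c2 : ((i.succ : Fin (m + 2)) : ℕ) = (i : ℕ) + 1 := rfl
      rw [dif_pos (by rw [c1]; omega : ((i.castSucc : Fin (m+2)) : ℕ) < m + 1),
          dif_pos (by rw [c2]; omega : ((i.succ : Fin (m+2)) : ℕ) < m + 1)]
      have := hf ⟨(i : ℕ), hi⟩
      have e1 : (⟨((i.castSucc : Fin (m+2)) : ℕ), by omega⟩ : Fin (m + 1)) =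
          Fin.castSucc ⟨(i : ℕ), hi⟩ := Fin.ext rfl
      have e2 : (⟨((i.succ : Fin (m+2)) : ℕ), by rw [c2]; omega⟩ : Fin (m + 1)) =
          Fin.succ ⟨(i : ℕ), hi⟩ := Fin.ext rfl
      rw [e1, e2]
      exact this
    · have hieq : (i : ℕ) = m := by omega
      have c1 : ((i.castSucc : Fin (m + 2)) : ℕ) = (i : ℕ) := rfl
      have c2 : ((i.succ : Fin (m + 2)) : ℕ) = m + 1 := by
        simp [Fin.succ, hieq]
      rw [dif_pos (by rw [c1]; omega : ((i.castSucc : Fin (m+2)) : ℕ) < m + 1),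
          dif_neg (by rw [c2]; omega)]
      have e1 : (⟨((i.castSucc : Fin (m+2)) : ℕ), by omega⟩ : Fin (m + 1)) =
          Fin.last m := Fin.ext (by simpa using hieq)
      rw [e1, hlast]
      exact hxy

/-- Gallai–Roy style coloring for a `P_k`-free oriented graph. -/
lemma exists_coloring {k n : ℕ} (hk : 2 ≤ k) (G : Fin n → Fin n → Prop)
    (hirr : ∀ v, ¬ G v v) (hasym : ∀ u v, G u v → ¬ G v u)
    (hfree : ¬ Copies (fun i j : Fin k => (i : ℕ) + 1 = (j : ℕ)) G) :
    ∃ c : Fin n → ℕ, (∀ v, c v ≤ k - 2) ∧ (∀ u v, G u v → c u ≠ c v) := by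
  classical
  -- maximal acyclic subgraph
  set 𝒮 : Set (Finset (Fin n × Fin n)) :=
    {D | (∀ p ∈ D, G p.1 p.2) ∧ ∀ x, ¬ TransGen (fun a b : Fin n => (a, b) ∈ D) x x} with h𝒮
  have hempty : (∅ : Finset (Fin n × Fin n)) ∈ 𝒮 := by
    constructor
    · simp
    · intro x hx
      cases hx with
      | single hs => simp at hs
      | tail _ hs => simp at hs
  obtain ⟨D, hDm⟩ := Set.Finite.exists_maximal (Set.toFinite 𝒮) ⟨∅, hempty⟩
  have hD := hDm.1
  have hmax : ∀ a ∈ 𝒮, D ≤ a → D = a := fun a ha hle => le_antisymm hle (hDm.2 ha hle)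
  set R : Fin n → Fin n → Prop := fun a b => (a, b) ∈ D with hRdef
  have hR1 : ∀ a b, R a b → G a b := fun a b h => hD.1 (a, b) h
  have hR2 : ∀ x, ¬ TransGen R x x := hD.2
  -- key property of maximality
  have hkey : ∀ u v, G u v → R u v ∨ ReflTransGen R v u := by
    intro u v huv
    by_cases h : (u, v) ∈ D
    · exact Or.inl h
    · right
      have hne : D ≠ insert (u, v) D := by
        intro he
        exact h (he ▸ Finset.mem_insert_self _ _)
      have hnot : insert (u, v) D ∉ 𝒮 := by
        intro hmem
        exact hne (hmax _ hmem (Finset.subset_insert _ _))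
      have h1 : ∀ p ∈ insert (u, v) D, G p.1 p.2 := by
        intro p hp
        rcases Finset.mem_insert.mp hp with rfl | hp
        · exact huv
        · exact hD.1 p hp
      have h2 : ∃ x, TransGen (fun a b : Fin n => (a, b) ∈ insert (u, v) D) x x := by
        by_contra hcon
        push_neg at hcon
        exact hnot ⟨h1, hcon⟩
      obtain ⟨x, hx⟩ := h2
      have hx' : TransGen (fun a b : Fin n => R a b ∨ (a = u ∧ b = v)) x x := by
        refine TransGen.mono ?_ _ _ hx
        intro a b hab
        rcases Finset.mem_insert.mp hab with he | hab
        · right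
          exact ⟨congrArg Prod.fst he, congrArg Prod.snd he⟩
        · exact Or.inl hab
      rcases transGen_union_single hx' with t | ⟨p, q⟩
      · exact absurd t (hR2 x)
      · exact q.trans p
  -- chains in R
  set S : Fin n → Set ℕ := fun v =>
    {m | ∃ f : Fin (m + 1) → Fin n, f (Fin.last m) = v ∧
      ∀ i : Fin m, R (f i.castSucc) (f i.succ)} with hSdef
  have h0 : ∀ v, 0 ∈ S v := fun v => ⟨fun _ => v, rfl, fun i => i.elim0⟩
  have hbd : ∀ v, ∀ m ∈ S v, m ≤ k - 2 := by
    rintro v m ⟨f, hlast, hf⟩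
    by_contra hm
    push_neg at hm
    have hkm : k ≤ m + 1 := by omega
    set g : Fin k → Fin n := fun i => f ⟨(i : ℕ), by omega⟩ with hg
    have hginj : Function.Injective g := by
      intro i j hij
      by_contra hne
      have htg : ∀ a b : Fin k, (a : ℕ) < (b : ℕ) → TransGen R (g a) (g b) := by
        intro a b hab
        exact chain_transGen f hf (b : ℕ) (by omega) ⟨(a : ℕ), by omega⟩ hab
      rcases Nat.lt_or_ge (i : ℕ) (j : ℕ) with h | h
      · exact hR2 _ (hij ▸ htg i j h)
      · have : (j : ℕ) < (i : ℕ) := by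
          rcases Nat.lt_or_ge (j : ℕ) (i : ℕ) with h' | h'
          · exact h'
          · exact absurd (Fin.ext (by omega)) hne
        exact hR2 _ (hij ▸ htg j i this)
    refine hfree ⟨g, hginj, ?_⟩
    intro a b hab
    have ham : (a : ℕ) < m := by
      have := b.isLt
      omega
    have := hR1 _ _ (hf ⟨(a : ℕ), ham⟩)
    have e1 : g a = f (Fin.castSucc ⟨(a : ℕ), ham⟩) := by
      simp [hg, Fin.castSucc, Fin.castAdd, Fin.castLE]
    have e2 : g b = f (Fin.succ ⟨(a : ℕ), ham⟩) := by
      simp only [hg]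
      congr 1
      exact Fin.ext (by simp [Fin.succ]; omega)
    rw [e1, e2]
    exact this
  have hbdd : ∀ v, BddAbove (S v) := fun v => ⟨k - 2, fun m hm => hbd v m hm⟩
  set c : Fin n → ℕ := fun v => sSup (S v) with hc
  have hcmem : ∀ v, c v ∈ S v := fun v => Nat.sSup_mem ⟨0, h0 v⟩ (hbdd v)
  have hcle : ∀ v, c v ≤ k - 2 := fun v => hbd v _ (hcmem v)
  have hstep : ∀ x y, R x y → c x < c y := by
    intro x y hxy
    obtain ⟨f, hlast, hf⟩ := hcmem x
    obtain ⟨g, hg1, hg2⟩ := chain_extend f hlast hf hxy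
    have hmem : c x + 1 ∈ S y := ⟨g, hg1, hg2⟩
    have : c x + 1 ≤ c y := le_csSup (hbdd y) hmem
    omega
  have hmono : ∀ x y, ReflTransGen R x y → c x ≤ c y := by
    intro x y h
    induction h with
    | refl => exact le_rfl
    | tail _ hs ih => exact le_of_lt (lt_of_le_of_lt ih (hstep _ _ hs))
  refine ⟨c, hcle, ?_⟩
  intro u v huv
  rcases hkey u v huv with h | h
  · exact Nat.ne_of_lt (hstep _ _ h)
  · rcases h.cases_head with heq | ⟨w, hvw, hwu⟩
    · cases heq
      exact absurd huv (hirr _)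
    · have : c v < c u := lt_of_lt_of_le (hstep _ _ hvw) (hmono _ _ hwu)
      exact (Nat.ne_of_lt this).symm

/-- Upper bound: arcs of a `P_k`-free oriented graph. -/
lemma arcs_le {k n : ℕ} (hk : 2 ≤ k) (G : Fin n → Fin n → Prop)
    (hirr : ∀ v, ¬ G v v) (hasym : ∀ u v, G u v → ¬ G v u)
    (hfree : ¬ Copies (fun i j : Fin k => (i : ℕ) + 1 = (j : ℕ)) G) :
    {p : Fin n × Fin n | G p.1 p.2}.ncard ≤ eTuran n (k - 1) := by
  classical
  set H : SimpleGraph (Fin n) :=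
    { Adj := fun x y => G x y ∨ G y x
      symm := ⟨fun x y h => h.symm⟩
      loopless := ⟨fun x h => by rcases h with h | h <;> exact hirr x h⟩ } with hHdef
  have hAdj : ∀ u v, H.Adj u v ↔ G u v ∨ G v u := fun u v => Iff.rfl
  obtain ⟨c, hcle, hcprop⟩ := exists_coloring hk G hirr hasym hfree
  have hprop : ∀ u v : Fin n, H.Adj u v → c u ≠ c v := by
    intro u v hadj
    rcases (hAdj u v).mp hadj with h | h
    · exact hcprop _ _ h
    · exact (hcprop _ _ h).symm
  have hcol : H.Colorable (k - 1) :=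
    ⟨SimpleGraph.Coloring.mk (fun v => (⟨c v, by have := hcle v; omega⟩ : Fin (k - 1)))
      (fun hadj hcc => hprop _ _ hadj (by simpa [Fin.ext_iff] using hcc))⟩
  have hcf : H.CliqueFree k := hcol.cliqueFree (by omega)
  have hcf' : H.CliqueFree (k - 1 + 1) := by
    have : k - 1 + 1 = k := by omega
    rw [this]
    exact hcf
  letI : DecidableRel H.Adj := Classical.decRel _
  have htm := SimpleGraph.isTuranMaximal_turanGraph (n := n) (r := k - 1) (by omega)
  have hle := htm.2 hcf'
  have e1 : {p : Fin n × Fin n | G p.1 p.2}.ncard = H.edgeSet.ncard :=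
    arcs_ncard_eq G hasym H hAdj
  have e2 : H.edgeSet.ncard = H.edgeFinset.card := by
    rw [← SimpleGraph.coe_edgeFinset, Set.ncard_coe_finset]
  have e3 : eTuran n (k - 1) = (SimpleGraph.turanGraph n (k - 1)).edgeFinset.card := by
    rw [eTuran, ← SimpleGraph.coe_edgeFinset, Set.ncard_coe_finset]
  omega

/-- for the directed path on `k ≥ 2` vertices (arcs `i → i+1`),
`exo(n, P_k) = e(T(n, k-1))` for every `n`. -/
theorem stmt_3 (k : ℕ) (hk : 2 ≤ k) (n : ℕ) :
    exo n (fun i j : Fin k => (i : ℕ) + 1 = (j : ℕ)) = eTuran n (k - 1) := by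
  classical
  set F : Fin k → Fin k → Prop := fun i j => (i : ℕ) + 1 = (j : ℕ) with hF
  set S : Set ℕ := {m : ℕ | ∃ G : Fin n → Fin n → Prop,
    (∀ v, ¬ G v v) ∧ (∀ u v, G u v → ¬ G v u) ∧
    ¬ Copies F G ∧ {p : Fin n × Fin n | G p.1 p.2}.ncard = m} with hS
  have hkpos : 0 < k - 1 := by omega
  -- the extremal example
  set G₀ : Fin n → Fin n → Prop := fun u v => (u : ℕ) % (k - 1) < (v : ℕ) % (k - 1) with hG₀
  have hirr₀ : ∀ v, ¬ G₀ v v := fun v => lt_irrefl _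
  have hasym₀ : ∀ u v, G₀ u v → ¬ G₀ v u := fun u v h h' => absurd (h.trans h') (lt_irrefl _)
  have hfree₀ : ¬ Copies F G₀ := by
    rintro ⟨f, hinj, hf⟩
    have hcl : ∀ i : ℕ, ∀ h : i < k, i ≤ ((f ⟨i, h⟩ : Fin n) : ℕ) % (k - 1) := by
      intro i
      induction i with
      | zero => intro h; exact Nat.zero_le _
      | succ i ih =>
        intro h
        have hik : i < k := by omega
        have harc : F ⟨i, hik⟩ ⟨i + 1, h⟩ := by simp [hF]
        have := hf _ _ harc
        have := ih hik
        simp only [hG₀] at *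
        omega
    have h1 := hcl (k - 1) (by omega)
    have h2 : ((f ⟨k - 1, by omega⟩ : Fin n) : ℕ) % (k - 1) < k - 1 := Nat.mod_lt _ hkpos
    omega
  have hAdj₀ : ∀ u v : Fin n, (SimpleGraph.turanGraph n (k - 1)).Adj u v ↔ G₀ u v ∨ G₀ v u := by
    intro u v
    simp only [SimpleGraph.turanGraph, hG₀]
    omega
  have hmem : eTuran n (k - 1) ∈ S := by
    refine ⟨G₀, hirr₀, hasym₀, hfree₀, ?_⟩
    rw [arcs_ncard_eq G₀ hasym₀ _ hAdj₀]
    rfl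
  have hbdd : BddAbove S := by
    refine ⟨(Set.univ : Set (Fin n × Fin n)).ncard, ?_⟩
    rintro m ⟨G, -, -, -, hm⟩
    rw [← hm]
    exact Set.ncard_le_ncard (Set.subset_univ _) Set.finite_univ
  have hub : ∀ m ∈ S, m ≤ eTuran n (k - 1) := by
    rintro m ⟨G, hirr, hasym, hfree, hm⟩
    rw [← hm]
    exact arcs_le hk G hirr hasym hfree
  exact le_antisymm (csSup_le ⟨_, hmem⟩ hub) (le_csSup hbdd hmem)
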